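/- Let f : ℝ^n → ℝ be continuously differentiable, M ⊆ ℝ^n closed, and K : ℝ^n → Set ℝ^m a set-valued mapping with closed graph; let z̄ ∈ M ∩ dom K be a point at which K is inner semicompact w.r.t. dom K. If z̄ is implicitly B-stationary, i.e., ⟪∇f(z̄), w⟫ ≥ 0 for all w ∈ T_M(z̄) ∩ T_{dom K}(z̄), then z̄ is (a) abstractly B-stationary: ⟪∇f(z̄), w⟫ ≥ 0 for all w ∈ T_{M ∩ dom K}(z̄), and (b) explicitly B-stationary: for every λ̄ ∈ K z̄ and every w ∈ T_M(z̄) such that (w, d) ∈ T_{gph K}(z̄, λ̄) for some d ∈ ℝ^m, one has ⟪∇f(z̄), w⟫ ≥ 0. -/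
import Mathlib


open Filter Metric Set Bornology
open scoped RealInnerProductSpace Topology Pointwise

noncomputable section

/-- The Bouligand tangent cone to `Ω` at `x`: `w` belongs to it iff there are `t k ↓ 0`
(positive) and `v k → w` with `x + t k • v k ∈ Ω` for all `k`. -/
def bouligandTangentCone {E : Type*} [NormedAddCommGroup E] [NormedSpace ℝ E]
    (Ω : Set E) (x : E) : Set E :=
  {w | ∃ (t : ℕ → ℝ) (v : ℕ → E), (∀ k, 0 < t k) ∧
    Tendsto t atTop (𝓝 0) ∧ Tendsto v atTop (𝓝 w) ∧ ∀ k, x + t k • v k ∈ Ω}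

/-- The regular (Fréchet) normal cone, defined as the polar of the Bouligand tangent cone. -/
def regNormalCone {E : Type*} [NormedAddCommGroup E] [InnerProductSpace ℝ E]
    (Ω : Set E) (x : E) : Set E :=
  {ζ | ∀ w ∈ bouligandTangentCone Ω x, ⟪ζ, w⟫ ≤ 0}

/-- The regular (Fréchet) normal cone for subsets of a product of inner product spaces,
using the natural pairing on the product. -/
def regNormalConeProd {E F : Type*} [NormedAddCommGroup E] [InnerProductSpace ℝ E]
    [NormedAddCommGroup F] [InnerProductSpace ℝ F]
    (Ω : Set (E × F)) (p : E × F) : Set (E × F) :=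
  {ζ | ∀ q ∈ bouligandTangentCone Ω p, ⟪ζ.1, q.1⟫ + ⟪ζ.2, q.2⟫ ≤ 0}

/-- The domain of a set-valued mapping: the points with nonempty image. -/
def svDom {E F : Type*} (K : E → Set F) : Set E := {z | (K z).Nonempty}

/-- The graph of a set-valued mapping. -/
def svGraph {E F : Type*} (K : E → Set F) : Set (E × F) := {p | p.2 ∈ K p.1}

/-- `K` is inner semicompact at `zb` w.r.t. its domain: for every sequence in `dom K`
converging to `zb` there is a selection of images possessing a bounded subsequence. -/
def InnerSemicompactAt {E F : Type*} [TopologicalSpace E] [Bornology F]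
    (K : E → Set F) (zb : E) : Prop :=
  ∀ zs : ℕ → E, (∀ k, zs k ∈ svDom K) → Tendsto zs atTop (𝓝 zb) →
    ∃ ls : ℕ → F, (∀ k, ls k ∈ K (zs k)) ∧
      ∃ φ : ℕ → ℕ, StrictMono φ ∧ IsBounded (Set.range (ls ∘ φ))

/-- `K` is inner calm* in the fuzzy sense at `zb` w.r.t. its domain. -/
def InnerCalmStarFuzzyAt {E F : Type*} [NormedAddCommGroup E] [NormedSpace ℝ E]
    [NormedAddCommGroup F] (K : E → Set F) (zb : E) : Prop :=
  ∀ d ∈ bouligandTangentCone (svDom K) zb, ‖d‖ = 1 →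
    ∃ κ > (0 : ℝ), ∃ lb : F, ∃ (t : ℕ → ℝ) (ds : ℕ → E) (ls : ℕ → F),
      (∀ k, 0 < t k) ∧ Tendsto t atTop (𝓝 0) ∧ Tendsto ds atTop (𝓝 d) ∧
      Tendsto ls atTop (𝓝 lb) ∧
      ∀ k, ls k ∈ K (zb + t k • ds k) ∧ ‖ls k - lb‖ ≤ κ * t k * ‖ds k‖

/-- If `zb` is implicitly B-stationary, then it is abstractly B-stationary and explicitly
B-stationary. -/
theorem stmt_6 {n m : ℕ} (f : EuclideanSpace ℝ (Fin n) → ℝ)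
    (M : Set (EuclideanSpace ℝ (Fin n)))
    (K : EuclideanSpace ℝ (Fin n) → Set (EuclideanSpace ℝ (Fin m)))
    (zb : EuclideanSpace ℝ (Fin n))
    (hf : ContDiff ℝ 1 f)
    (hM : IsClosed M)
    (hgph : IsClosed (svGraph K))
    (hfeas : zb ∈ M ∩ svDom K)
    (hisc : InnerSemicompactAt K zb)
    (hstat : ∀ w ∈ bouligandTangentCone M zb ∩ bouligandTangentCone (svDom K) zb,
      0 ≤ ⟪gradient f zb, w⟫) :
    (∀ w ∈ bouligandTangentCone (M ∩ svDom K) zb, 0 ≤ ⟪gradient f zb, w⟫) ∧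
    (∀ lamb ∈ K zb, ∀ w ∈ bouligandTangentCone M zb,
      (∃ d, (w, d) ∈ bouligandTangentCone (svGraph K) (zb, lamb)) →
        0 ≤ ⟪gradient f zb, w⟫) := by
  constructor
  · rintro w ⟨t, v, ht, htt, hv, hmem⟩
    exact hstat w ⟨⟨t, v, ht, htt, hv, fun k => (hmem k).1⟩,
      ⟨t, v, ht, htt, hv, fun k => (hmem k).2⟩⟩
  · rintro lamb - w hw ⟨d, t, v, ht, htt, hv, hmem⟩
    refine hstat w ⟨hw, t, fun k => (v k).1, ht, htt,
      (continuous_fst.tendsto _).comp hv, fun k => ⟨lamb + t k • (v k).2, ?_⟩⟩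
    have := hmem k
    simpa [svGraph, Prod.add_def, Prod.smul_def] using this
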